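/- Let u, v be points of the Poincaré disk (‖u‖, ‖v‖ < 1) with u, v ≠ 0, and let α ∈ [0, π/2] be the angle between the vectors u and v, i.e., α = arccos(⟨u,v⟩/(‖u‖‖v‖)). Then the hyperbolic distance from v to the complete geodesic through the origin in direction u (a Euclidean diameter) equals arsinh(sinh(d(v,O)) · sin α) = arsinh((2‖v‖/(1−‖v‖²)) · sin α). -/

import Mathlib

/-- The inverse hyperbolic cosine on `[1, ∞)`. -/
noncomputable def arcosh (x : ℝ) : ℝ := Real.log (x + Real.sqrt (x ^ 2 - 1))

/-- Hyperbolic distance in the Poincaré ball model with curvature `-1`. -/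
noncomputable def pdist {n : ℕ} (x y : EuclideanSpace ℝ (Fin n)) : ℝ :=
  arcosh (1 + 2 * ‖x - y‖ ^ 2 / ((1 - ‖x‖ ^ 2) * (1 - ‖y‖ ^ 2)))

lemma arcosh_eq_arsinh_sqrt {x : ℝ} (hx : 1 ≤ x) :
    arcosh x = Real.arsinh (Real.sqrt (x ^ 2 - 1)) := by
  have h1 : (0:ℝ) ≤ x ^ 2 - 1 := by nlinarith
  rw [arcosh, Real.arsinh]
  have h2 : 1 + Real.sqrt (x ^ 2 - 1) ^ 2 = x ^ 2 := by
    rw [Real.sq_sqrt h1]; ring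
  rw [h2, Real.sqrt_sq (by linarith : (0:ℝ) ≤ x), add_comm]

set_option maxHeartbeats 1600000

/-- In the Poincaré disk, the distance from `v` to the diameter through the origin in
direction `u` is `arsinh (sinh (d(v,O)) · sin α) = arsinh ((2‖v‖/(1−‖v‖²)) · sin α)`,
where `α` is the angle between `u` and `v`. -/
theorem dist_to_diameter {n : ℕ} (u v : EuclideanSpace ℝ (Fin n))
    (hu0 : u ≠ 0) (hv0 : v ≠ 0) (hu : ‖u‖ < 1) (hv : ‖v‖ < 1) (α : ℝ)
    (hα : α = Real.arccos ((inner ℝ u v : ℝ) / (‖u‖ * ‖v‖)))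
    (hα2 : α ≤ Real.pi / 2) :
    sInf {d : ℝ | ∃ t : ℝ, ‖t • u‖ < 1 ∧ d = pdist v (t • u)} =
        Real.arsinh (Real.sinh (pdist v 0) * Real.sin α) ∧
      Real.arsinh (Real.sinh (pdist v 0) * Real.sin α) =
        Real.arsinh (2 * ‖v‖ / (1 - ‖v‖ ^ 2) * Real.sin α) := by
  set r := ‖v‖ with hrdef
  have hr0 : 0 < r := norm_pos_iff.mpr hv0
  have hu0' : 0 < ‖u‖ := norm_pos_iff.mpr hu0
  set c : ℝ := (inner ℝ u v : ℝ) / (‖u‖ * ‖v‖) with hcdef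
  have hc1 : |c| ≤ 1 := abs_real_inner_div_norm_mul_norm_le_one u v
  have hcle : c ≤ 1 := (abs_le.mp hc1).2
  have hcge : -1 ≤ c := (abs_le.mp hc1).1
  have hα0 : 0 ≤ α := hα ▸ Real.arccos_nonneg _
  have hcosα : Real.cos α = c := by rw [hα]; exact Real.cos_arccos hcge hcle
  have hc0 : 0 ≤ c := by
    rw [← hcosα]
    exact Real.cos_nonneg_of_mem_Icc ⟨by linarith [Real.pi_pos], hα2⟩
  have hsinα : Real.sin α = Real.sqrt (1 - c ^ 2) := by rw [hα, hcdef]; exact Real.sin_arccos _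
  have hr1 : r ^ 2 < 1 := by nlinarith
  have hden : (0:ℝ) < 1 - r ^ 2 := by linarith
  set k : ℝ := 2 * r / (1 - r ^ 2) with hkdef
  have hk0 : 0 ≤ k := by positivity
  have hc2 : (0:ℝ) ≤ 1 - c ^ 2 := by nlinarith [sq_abs c, abs_nonneg c]
  have hinner : (inner ℝ u v : ℝ) = c * (‖u‖ * r) := by
    rw [hcdef]; field_simp; rw [hrdef]
  clear_value r c k
  -- formula for pdist v (t • u)
  have form : ∀ t : ℝ, ‖t • u‖ < 1 →
      pdist v (t • u) = Real.arsinh (Real.sqrt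
        ((((1 + (t * ‖u‖) ^ 2) * (1 + r ^ 2) - 4 * (t * ‖u‖) * c * r)
          / ((1 - r ^ 2) * (1 - (t * ‖u‖) ^ 2))) ^ 2 - 1)) := by
    intro t ht
    set s := t * ‖u‖ with hsdef
    clear_value s
    have hnorm : ‖t • u‖ ^ 2 = s ^ 2 := by
      rw [norm_smul, hsdef]; simp [mul_pow, sq_abs]
    have hs1 : s ^ 2 < 1 := by
      rw [← hnorm]; nlinarith [norm_nonneg (t • u)]
    have hGpos : (0:ℝ) < (1 - r ^ 2) * (1 - s ^ 2) := by
      apply mul_pos hden; linarith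
    have hsub : ‖v - t • u‖ ^ 2 = r ^ 2 - 2 * (s * c * r) + s ^ 2 := by
      rw [norm_sub_sq_real, hnorm]
      have : (inner ℝ v (t • u) : ℝ) = s * c * r := by
        rw [real_inner_smul_right, real_inner_comm, hinner, hsdef]; ring
      rw [this, ← hrdef]
    have habs : s * c ≤ |s| := by
      calc s * c ≤ |s| * c := by nlinarith [le_abs_self s]
        _ ≤ |s| := by nlinarith [abs_nonneg s]
    have hnum : (0:ℝ) ≤ r ^ 2 - 2 * (s * c * r) + s ^ 2 := by
      nlinarith [sq_abs s, sq_nonneg (r - |s|)]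
    have hF : 1 + 2 * ‖v - t • u‖ ^ 2 / ((1 - r ^ 2) * (1 - ‖t • u‖ ^ 2)) =
        ((1 + s ^ 2) * (1 + r ^ 2) - 4 * s * c * r) / ((1 - r ^ 2) * (1 - s ^ 2)) := by
      rw [hsub, hnorm]
      have h2 : (1 - s ^ 2) ≠ 0 := by nlinarith
      field_simp
      ring
    have hge1 : (1:ℝ) ≤ ((1 + s ^ 2) * (1 + r ^ 2) - 4 * s * c * r)
        / ((1 - r ^ 2) * (1 - s ^ 2)) := by
      rw [le_div_iff₀ hGpos]
      nlinarith [hnum]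
    rw [pdist, ← hrdef, hF, arcosh_eq_arsinh_sqrt hge1]
  -- lower bound and value
  set A := Real.arsinh (k * Real.sqrt (1 - c ^ 2)) with hAdef
  set S := {d : ℝ | ∃ t : ℝ, ‖t • u‖ < 1 ∧ d = pdist v (t • u)} with hSdef
  clear_value A
  have hlb : ∀ d ∈ S, A ≤ d := by
    rintro d ⟨t, ht, rfl⟩
    rw [form t ht]
    set s := t * ‖u‖ with hsdef
    clear_value s
    have hnorm : ‖t • u‖ ^ 2 = s ^ 2 := by
      rw [norm_smul, hsdef]; simp [mul_pow, sq_abs]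
    have hs1 : s ^ 2 < 1 := by
      rw [← hnorm]; nlinarith [norm_nonneg (t • u)]
    have hGpos : (0:ℝ) < (1 - r ^ 2) * (1 - s ^ 2) := by
      apply mul_pos hden; linarith
    rw [hAdef]
    apply Real.arsinh_le_arsinh.mpr
    have hksq : (k * Real.sqrt (1 - c ^ 2)) ^ 2 = k ^ 2 * (1 - c ^ 2) := by
      rw [mul_pow, Real.sq_sqrt hc2]
    have hid : (((1 + s ^ 2) * (1 + r ^ 2) - 4 * s * c * r)
          / ((1 - r ^ 2) * (1 - s ^ 2))) ^ 2 - 1 - k ^ 2 * (1 - c ^ 2) =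
        (2 * (c * r * (1 + s ^ 2) - s * (1 + r ^ 2))) ^ 2
          / ((1 - r ^ 2) * (1 - s ^ 2)) ^ 2 := by
      rw [hkdef]
      have h1 : (1 - r ^ 2) ≠ 0 := ne_of_gt hden
      have h2 : (1 - s ^ 2) ≠ 0 := by nlinarith
      field_simp
      ring
    have hkey : (k * Real.sqrt (1 - c ^ 2)) ^ 2 ≤
        (((1 + s ^ 2) * (1 + r ^ 2) - 4 * s * c * r)
          / ((1 - r ^ 2) * (1 - s ^ 2))) ^ 2 - 1 := by
      rw [hksq]
      have hpos : (0:ℝ) ≤ (2 * (c * r * (1 + s ^ 2) - s * (1 + r ^ 2))) ^ 2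
          / ((1 - r ^ 2) * (1 - s ^ 2)) ^ 2 := by positivity
      linarith
    calc k * Real.sqrt (1 - c ^ 2)
        = Real.sqrt ((k * Real.sqrt (1 - c ^ 2)) ^ 2) := by
          rw [Real.sqrt_sq (by positivity)]
      _ ≤ _ := Real.sqrt_le_sqrt hkey
  have hmem : A ∈ S := by
    -- choose the optimal s
    obtain ⟨s, hs0, hs1, hE⟩ : ∃ s : ℝ, 0 ≤ s ∧ s < 1 ∧
        c * r * (1 + s ^ 2) - s * (1 + r ^ 2) = 0 := by
      rcases eq_or_lt_of_le hc0 with hc | hc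
      · exact ⟨0, le_refl _, one_pos, by rw [← hc]; ring⟩
      · set D := Real.sqrt ((1 + r ^ 2) ^ 2 - 4 * c ^ 2 * r ^ 2) with hDdef
        have hdisc : (0:ℝ) ≤ (1 + r ^ 2) ^ 2 - 4 * c ^ 2 * r ^ 2 := by nlinarith
        have hD2 : D ^ 2 = (1 + r ^ 2) ^ 2 - 4 * c ^ 2 * r ^ 2 := Real.sq_sqrt hdisc
        have hD0 : 0 ≤ D := Real.sqrt_nonneg _
        clear_value D
        have hDlt : D ≤ 1 + r ^ 2 := by nlinarith
        have hcr : (0:ℝ) < 2 * c * r := by positivity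
        refine ⟨((1 + r ^ 2) - D) / (2 * c * r),
          div_nonneg (by linarith) (le_of_lt hcr), ?_, ?_⟩
        · rw [div_lt_one hcr]
          by_contra h
          push_neg at h
          have hB : D ≤ 1 + r ^ 2 - 2 * c * r := by linarith
          have hB0 : (0:ℝ) ≤ 1 + r ^ 2 - 2 * c * r := le_trans hD0 hB
          have hsq : D ^ 2 ≤ (1 + r ^ 2 - 2 * c * r) ^ 2 := by nlinarith
          have h2 : 1 + r ^ 2 ≤ 2 * c * r := by nlinarith [hD2, hcr, mul_pos hcr hcr]
          nlinarith [mul_pos (sub_pos.mpr hv) (sub_pos.mpr hv),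
            mul_nonneg (by linarith : (0:ℝ) ≤ 1 - c) (le_of_lt hr0)]
        · field_simp
          nlinarith [hD2]
    refine ⟨s / ‖u‖, ?_, ?_⟩
    · rw [norm_smul]
      simp only [Real.norm_eq_abs, abs_div, abs_of_nonneg hs0, abs_of_pos hu0']
      rw [div_mul_cancel₀ _ (ne_of_gt hu0')]
      exact hs1
    · have hts : s / ‖u‖ * ‖u‖ = s := div_mul_cancel₀ _ (ne_of_gt hu0')
      have ht : ‖(s / ‖u‖) • u‖ < 1 := by
        rw [norm_smul]
        simp only [Real.norm_eq_abs, abs_div, abs_of_nonneg hs0, abs_of_pos hu0']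
        rw [div_mul_cancel₀ _ (ne_of_gt hu0')]
        exact hs1
      rw [form _ ht, hts, hAdef]
      congr 1
      have hs2 : s ^ 2 < 1 := by nlinarith
      have hGpos : (0:ℝ) < (1 - r ^ 2) * (1 - s ^ 2) := by
        apply mul_pos hden; linarith
      have heq : (((1 + s ^ 2) * (1 + r ^ 2) - 4 * s * c * r)
          / ((1 - r ^ 2) * (1 - s ^ 2))) ^ 2 - 1 = k ^ 2 * (1 - c ^ 2) := by
        have hid : (((1 + s ^ 2) * (1 + r ^ 2) - 4 * s * c * r)
              / ((1 - r ^ 2) * (1 - s ^ 2))) ^ 2 - 1 - k ^ 2 * (1 - c ^ 2) =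
            (2 * (c * r * (1 + s ^ 2) - s * (1 + r ^ 2))) ^ 2
              / ((1 - r ^ 2) * (1 - s ^ 2)) ^ 2 := by
          rw [hkdef]
          have h1 : (1 - r ^ 2) ≠ 0 := ne_of_gt hden
          have h2 : (1 - s ^ 2) ≠ 0 := by nlinarith
          field_simp
          ring
        rw [hE] at hid
        simp at hid
        linarith
      rw [heq, Real.sqrt_mul (sq_nonneg k), Real.sqrt_sq hk0]
  have hne : S.Nonempty := ⟨_, hmem⟩
  have hinf : sInf S = A := le_antisymm (csInf_le ⟨A, hlb⟩ hmem) (le_csInf hne hlb)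
  -- sinh (pdist v 0) = k
  have hx1 : (1:ℝ) ≤ (1 + r ^ 2) / (1 - r ^ 2) := by
    rw [le_div_iff₀ hden]; nlinarith
  have hpd0 : pdist v 0 = Real.arsinh k := by
    rw [pdist]
    have h0 : ‖(0 : EuclideanSpace ℝ (Fin n))‖ = 0 := norm_zero
    rw [sub_zero, h0]
    have : 1 + 2 * ‖v‖ ^ 2 / ((1 - ‖v‖ ^ 2) * (1 - (0:ℝ) ^ 2)) = (1 + r ^ 2) / (1 - r ^ 2) := by
      rw [← hrdef]; field_simp; ring
    rw [this, arcosh_eq_arsinh_sqrt hx1]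
    congr 1
    have : ((1 + r ^ 2) / (1 - r ^ 2)) ^ 2 - 1 = k ^ 2 := by
      rw [hkdef]; field_simp; ring
    rw [this, Real.sqrt_sq hk0]
  have hsinh : Real.sinh (pdist v 0) = k := by rw [hpd0, Real.sinh_arsinh]
  constructor
  · rw [hinf, hsinh, hAdef, hsinα]
  · rw [hsinh, hkdef, hrdef]
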